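/- Let F be a tree and m a positive integer, and suppose Y is a tree with s'(F,Y) ≡ 0 (mod m), where s' counts induced F-matchings. Construct the rooted tree Z' by taking Δ(F)+2 disjoint copies of Y, adding a new root r, joining one copy to r by an edge, and joining each of the other Δ(F)+1 copies to r by a path of length two. If a tree T has an edge {u,v} with T^{(u,v)} ≅ Z', then s'(F,T) ≡ 0 (mod m). -/

import Mathlib

open SimpleGraph

/-- A subgraph `H` of `G` is a copy of `F` if `H` (as a graph on its vertex set)
is isomorphic to `F`. -/
def SimpleGraph.Subgraph.IsCopyOf {VG VF : Type*} {G : SimpleGraph VG}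
    (H : G.Subgraph) (F : SimpleGraph VF) : Prop :=
  Nonempty (H.coe ≃g F)

/-- An `F`-matching in `G` is a finite set of pairwise vertex-disjoint copies of `F`
in `G`. -/
def IsFMatching {VF VG : Type*} (F : SimpleGraph VF) (G : SimpleGraph VG)
    (M : Finset G.Subgraph) : Prop :=
  (∀ H ∈ M, H.IsCopyOf F) ∧
    (M : Set G.Subgraph).Pairwise fun H K => Disjoint H.verts K.verts

/-- `s(F,G)`: the number of `F`-matchings in `G`. -/
noncomputable def numFMatchings {VF VG : Type*} (F : SimpleGraph VF)
    (G : SimpleGraph VG) : ℕ :=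
  Set.ncard {M : Finset G.Subgraph | IsFMatching F G M}

/-- An induced `F`-matching: an `F`-matching such that no edge of `G` joins two
covered vertices other than the edges of the copies themselves. -/
def IsInducedFMatching {VF VG : Type*} (F : SimpleGraph VF) (G : SimpleGraph VG)
    (M : Finset G.Subgraph) : Prop :=
  IsFMatching F G M ∧
    ∀ a b : VG, G.Adj a b → (∃ H ∈ M, a ∈ H.verts) → (∃ H ∈ M, b ∈ H.verts) →
      ∃ H ∈ M, H.Adj a b

/-- `s'(F,G)`: the number of induced `F`-matchings in `G`. -/
noncomputable def numInducedFMatchings {VF VG : Type*} (F : SimpleGraph VF)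
    (G : SimpleGraph VG) : ℕ :=
  Set.ncard {M : Finset G.Subgraph | IsInducedFMatching F G M}

/-- The nullifying rooted tree `Z'` of Lemma 3.1: `D + 2` disjoint copies of `Y`
together with a new root `none`; copy `0` is joined to the root by an edge (at
its vertex `y₀ 0`), and each of the remaining `D + 1` copies is joined to the
root via a path of length two through the middle vertex `some (inr j)`. -/
def nullifyingTree' (D : ℕ) {VY : Type*} (Y : SimpleGraph VY)
    (y₀ : Fin (D + 2) → VY) :
    SimpleGraph (Option ((Fin (D + 2) × VY) ⊕ Fin (D + 1))) :=
  SimpleGraph.fromRel fun a b =>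
    match a, b with
    | some (.inl (i, y)), some (.inl (j, y')) => i = j ∧ Y.Adj y y'
    | none, some (.inl (i, y)) => i = 0 ∧ y = y₀ 0
    | none, some (.inr _) => True
    | some (.inr j), some (.inl (i, y)) => i = j.succ ∧ y = y₀ j.succ
    | _, _ => False

lemma subgraph_finite {V : Type*} [Finite V] (G : SimpleGraph V) : Finite G.Subgraph :=
  Finite.of_injective (fun H => (H.verts, H.Adj))
    (by rintro H K h; rw [Prod.mk.injEq] at h; exact SimpleGraph.Subgraph.ext h.1 h.2)

lemma walk_crossing {V : Type*} {G : SimpleGraph V} (P : V → Prop) :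
    ∀ {x y : V}, G.Walk x y → ¬ P x → P y →
      ∃ a b, G.Adj a b ∧ ¬ P a ∧ P b := by
  intro x y p
  induction p with
  | nil => intro h1 h2; exact absurd h2 h1
  | @cons a b c h p ih =>
      intro h1 h2
      by_cases hb : P b
      · exact ⟨a, b, h, h1, hb⟩
      · exact ih hb h2

lemma matching_mem_eq {VG : Type*} {G : SimpleGraph VG} {M : Finset G.Subgraph}
    (h2 : (M : Set G.Subgraph).Pairwise fun H K => Disjoint H.verts K.verts)
    {H K : G.Subgraph} (hH : H ∈ M) (hK : K ∈ M) {a : VG}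
    (ha : a ∈ H.verts) (hb : a ∈ K.verts) : H = K := by
  by_contra hne
  exact Set.disjoint_left.mp (h2 hH hK hne) ha hb

lemma IsInducedFMatching.subset {VF VG : Type*} {F : SimpleGraph VF} {G : SimpleGraph VG}
    {M c : Finset G.Subgraph} (hM : IsInducedFMatching F G M) (hc : c ⊆ M) :
    IsInducedFMatching F G c := by
  obtain ⟨⟨h1, h2⟩, h3⟩ := hM
  refine ⟨⟨fun H hH => h1 H (hc hH), h2.mono (by exact_mod_cast hc)⟩, ?_⟩
  rintro a b hab ⟨H1, hH1, ha⟩ ⟨H2, hH2, hb⟩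
  obtain ⟨K, hK, hKab⟩ := h3 a b hab ⟨H1, hc hH1, ha⟩ ⟨H2, hc hH2, hb⟩
  have hKH1 : K = H1 := matching_mem_eq h2 hK (hc hH1) (K.edge_vert hKab) ha
  exact ⟨H1, hH1, hKH1 ▸ hKab⟩

lemma SimpleGraph.Subgraph.IsCopyOf.verts_nonempty {VG VF : Type*} {G : SimpleGraph VG}
    {H : G.Subgraph} {F : SimpleGraph VF}
    (h : H.IsCopyOf F) (hne : Nonempty VF) : H.verts.Nonempty := by
  obtain ⟨f⟩ := h
  obtain ⟨x⟩ := hne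
  exact ⟨↑(f.symm x), (f.symm x).2⟩

lemma SimpleGraph.Subgraph.IsCopyOf.coe_connected {VG VF : Type*} {G : SimpleGraph VG}
    {H : G.Subgraph} {F : SimpleGraph VF}
    (h : H.IsCopyOf F) (hF : F.Connected) : H.coe.Connected := by
  obtain ⟨f⟩ := h
  exact hF.map f.symm.toHom f.symm.toEquiv.surjective

open Classical in
noncomputable def zidxA (D : ℕ) (P : Prop) (Q : Fin (D + 1) → Prop) : Fin (D + 2) :=
  if P then
    (if h : ∃ j, ¬ Q j then (Fin.find (fun j => ¬ Q j) h).succ else 0)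
  else 0

lemma zidxA_neg {D : ℕ} {P : Prop} {Q : Fin (D + 1) → Prop} (h : ¬ P) : zidxA D P Q = 0 := by
  simp [zidxA, h]

lemma zidxA_pos {D : ℕ} {P : Prop} {Q : Fin (D + 1) → Prop} (hP : P) (h : ∃ j, ¬ Q j) :
    ∃ j, ¬ Q j ∧ zidxA D P Q = j.succ := by
  classical
  refine ⟨_, Fin.find_spec (p := fun j => ¬ Q j) h, ?_⟩
  simp only [zidxA, if_pos hP]
  -- deal with the classical instance mismatch on Fin.find's DecidablePred
  rw [dif_pos h]

section
variable {VG VY : Type*} {G : SimpleGraph VG} {Y : SimpleGraph VY} {Z : Set VG}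

-- the embedding VY → VG induced by an iso ψ : G.induce Z ≃g Y
noncomputable def thetaMap (ψ : G.induce Z ≃g Y) : VY → VG := fun y => ↑(ψ.symm y)

lemma theta_inj (ψ : G.induce Z ≃g Y) : Function.Injective (thetaMap ψ) := by
  intro a b h
  exact ψ.symm.toEquiv.injective (Subtype.val_injective h)

lemma theta_mem (ψ : G.induce Z ≃g Y) (y : VY) : thetaMap ψ y ∈ Z := (ψ.symm y).2

lemma theta_range (ψ : G.induce Z ≃g Y) : Set.range (thetaMap ψ) = Z := by
  ext x
  constructor
  · rintro ⟨y, rfl⟩; exact theta_mem ψ y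
  · intro hx
    exact ⟨ψ ⟨x, hx⟩, by simp [thetaMap]⟩

lemma theta_adj (ψ : G.induce Z ≃g Y) {y y' : VY} :
    G.Adj (thetaMap ψ y) (thetaMap ψ y') ↔ Y.Adj y y' := by
  have := ψ.symm.map_rel_iff (a := y) (b := y')
  rw [← this]
  exact Iff.rfl

noncomputable def thetaHom (ψ : G.induce Z ≃g Y) : Y →g G where
  toFun := thetaMap ψ
  map_rel' := fun h => (theta_adj ψ).mpr h

noncomputable def fwdSub (ψ : G.induce Z ≃g Y) (N : Y.Subgraph) : G.Subgraph :=
  SimpleGraph.Subgraph.map (thetaHom ψ) N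

lemma fwdSub_verts (ψ : G.induce Z ≃g Y) (N : Y.Subgraph) :
    (fwdSub ψ N).verts = thetaMap ψ '' N.verts := rfl

lemma fwdSub_verts_subset (ψ : G.induce Z ≃g Y) (N : Y.Subgraph) :
    (fwdSub ψ N).verts ⊆ Z := by
  rintro x ⟨y, _, rfl⟩; exact theta_mem ψ y

lemma fwdSub_adj (ψ : G.induce Z ≃g Y) (N : Y.Subgraph) {a b : VG} :
    (fwdSub ψ N).Adj a b ↔ ∃ y y', N.Adj y y' ∧ thetaMap ψ y = a ∧ thetaMap ψ y' = b :=
  Iff.rfl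

lemma fwdSub_adj' (ψ : G.induce Z ≃g Y) (N : Y.Subgraph) {y y' : VY} :
    (fwdSub ψ N).Adj (thetaMap ψ y) (thetaMap ψ y') ↔ N.Adj y y' := by
  rw [fwdSub_adj]
  constructor
  · rintro ⟨a, b, h, ha, hb⟩
    rwa [theta_inj ψ ha, theta_inj ψ hb] at h
  · intro h; exact ⟨y, y', h, rfl, rfl⟩

noncomputable def backSub (ψ : G.induce Z ≃g Y) (H : G.Subgraph) : Y.Subgraph where
  verts := thetaMap ψ ⁻¹' H.verts
  Adj := fun y y' => H.Adj (thetaMap ψ y) (thetaMap ψ y')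
  adj_sub := fun h => (theta_adj ψ).mp (h.adj_sub)
  edge_vert := fun h => h.fst_mem
  symm := ⟨fun _ _ h => h.symm⟩

lemma backSub_fwdSub (ψ : G.induce Z ≃g Y) (N : Y.Subgraph) :
    backSub ψ (fwdSub ψ N) = N := by
  apply SimpleGraph.Subgraph.ext
  · exact Set.preimage_image_eq _ (theta_inj ψ)
  · ext y y'
    exact fwdSub_adj' ψ N

lemma fwdSub_backSub (ψ : G.induce Z ≃g Y) (H : G.Subgraph) (hH : H.verts ⊆ Z) :
    fwdSub ψ (backSub ψ H) = H := by
  apply SimpleGraph.Subgraph.ext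
  · show thetaMap ψ '' (thetaMap ψ ⁻¹' H.verts) = H.verts
    exact Set.image_preimage_eq_iff.mpr (by rw [theta_range]; exact hH)
  · ext a b
    rw [fwdSub_adj]
    constructor
    · rintro ⟨y, y', h, rfl, rfl⟩; exact h
    · intro h
      have ha : a ∈ Set.range (thetaMap ψ) := by rw [theta_range]; exact hH (H.edge_vert h)
      have hb : b ∈ Set.range (thetaMap ψ) := by rw [theta_range]; exact hH (H.edge_vert h.symm)
      obtain ⟨y, rfl⟩ := ha
      obtain ⟨y', rfl⟩ := hb
      exact ⟨y, y', h, rfl, rfl⟩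

noncomputable def fwdCoeIso (ψ : G.induce Z ≃g Y) (N : Y.Subgraph) :
    N.coe ≃g (fwdSub ψ N).coe where
  toEquiv := Equiv.ofBijective
    (fun x => ⟨thetaMap ψ ↑x, ⟨(x : VY), x.2, rfl⟩⟩)
    (by
      constructor
      · intro a b h
        have h' : thetaMap ψ ↑a = thetaMap ψ ↑b := Subtype.mk_eq_mk.mp h
        exact Subtype.ext (theta_inj ψ h')
      · rintro ⟨a, ⟨y, hy, rfl⟩⟩
        exact ⟨⟨y, hy⟩, rfl⟩)
  map_rel_iff' := by
    intro a b
    exact (fwdSub_adj' ψ N)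

lemma isCopyOf_fwdSub {VF : Type*} {F : SimpleGraph VF} (ψ : G.induce Z ≃g Y)
    (N : Y.Subgraph) : (fwdSub ψ N).IsCopyOf F ↔ N.IsCopyOf F := by
  constructor
  · rintro ⟨f⟩; exact ⟨(fwdCoeIso ψ N).trans f⟩
  · rintro ⟨f⟩; exact ⟨(fwdCoeIso ψ N).symm.trans f⟩
end

lemma fiber_ncard {VF VG VY : Type*} (F : SimpleGraph VF) (hVF : Nonempty VF)
    {G : SimpleGraph VG} {Y : SimpleGraph VY} {Z : Set VG} (ψ : G.induce Z ≃g Y)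
    (c : Finset G.Subgraph)
    (hcM : IsInducedFMatching F G c)
    (hcne : ∀ H ∈ c, H.verts.Nonempty)
    (hcZ : ∀ H ∈ c, Disjoint H.verts Z)
    (hbound : ∀ a b, G.Adj a b → a ∉ Z → b ∈ Z → ∀ H ∈ c, a ∉ H.verts) :
    {M : Finset G.Subgraph | IsInducedFMatching F G M ∧ c ⊆ M ∧
        ∀ H ∈ M, (H ∈ c ↔ ¬ H.verts ⊆ Z)}.ncard = numInducedFMatchings F Y := by
  classical
  have hcnotsub : ∀ H ∈ c, ¬ H.verts ⊆ Z := by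
    intro H hH hsub
    obtain ⟨x, hx⟩ := hcne H hH
    exact Set.disjoint_left.mp (hcZ H hH) hx (hsub hx)
  have hnotinc : ∀ N' : Y.Subgraph, fwdSub ψ N' ∉ c := by
    intro N' hmem
    exact hcnotsub _ hmem (fwdSub_verts_subset ψ N')
  rw [numInducedFMatchings, ← Nat.card_coe_set_eq, ← Nat.card_coe_set_eq]
  refine Nat.card_congr ?_
  -- the two maps
  have hΨmem : ∀ N : Finset Y.Subgraph, IsInducedFMatching F Y N →
      IsInducedFMatching F G (c ∪ N.image (fwdSub ψ)) ∧ c ⊆ c ∪ N.image (fwdSub ψ) ∧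
        ∀ H ∈ c ∪ N.image (fwdSub ψ), (H ∈ c ↔ ¬ H.verts ⊆ Z) := by
    intro N hN
    have hmem' : ∀ H ∈ c ∪ N.image (fwdSub ψ), H ∈ c ∨ ∃ N₀ ∈ N, H = fwdSub ψ N₀ := by
      intro H hH
      rcases Finset.mem_union.mp hH with h | h
      · exact Or.inl h
      · obtain ⟨N₀, hN₀, rfl⟩ := Finset.mem_image.mp h
        exact Or.inr ⟨N₀, hN₀, rfl⟩
    refine ⟨⟨⟨?_, ?_⟩, ?_⟩, Finset.subset_union_left, ?_⟩
    · intro H hH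
      rcases hmem' H hH with h | ⟨N₀, hN₀, rfl⟩
      · exact hcM.1.1 H h
      · exact (isCopyOf_fwdSub ψ N₀).mpr (hN.1.1 N₀ hN₀)
    · intro H1 h1 H2 h2 hne
      rcases hmem' H1 (Finset.mem_coe.mp h1) with hc1 | ⟨N₁, hN₁, rfl⟩ <;>
        rcases hmem' H2 (Finset.mem_coe.mp h2) with hc2 | ⟨N₂, hN₂, rfl⟩
      · exact hcM.1.2 (Finset.mem_coe.mpr hc1) (Finset.mem_coe.mpr hc2) hne
      · exact (hcZ H1 hc1).mono_right (fwdSub_verts_subset ψ N₂)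
      · exact ((hcZ H2 hc2).mono_right (fwdSub_verts_subset ψ N₁)).symm
      · have hNne : N₁ ≠ N₂ := by rintro rfl; exact hne rfl
        have hd := hN.1.2 (Finset.mem_coe.mpr hN₁) (Finset.mem_coe.mpr hN₂) hNne
        rw [fwdSub_verts, fwdSub_verts]
        exact Set.disjoint_image_of_injective (theta_inj ψ) hd
    · rintro a b hab ⟨H1, h1, ha⟩ ⟨H2, h2, hb⟩
      rcases hmem' H1 h1 with hc1 | ⟨N₁, hN₁, rfl⟩ <;>
        rcases hmem' H2 h2 with hc2 | ⟨N₂, hN₂, rfl⟩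
      · obtain ⟨K, hK, hadj⟩ := hcM.2 a b hab ⟨H1, hc1, ha⟩ ⟨H2, hc2, hb⟩
        exact ⟨K, Finset.mem_union_left _ hK, hadj⟩
      · exact absurd ha (hbound a b hab
          (fun haZ => Set.disjoint_left.mp (hcZ H1 hc1) ha haZ)
          (fwdSub_verts_subset ψ N₂ hb) H1 hc1)
      · exact absurd hb (hbound b a hab.symm
          (fun hbZ => Set.disjoint_left.mp (hcZ H2 hc2) hb hbZ)
          (fwdSub_verts_subset ψ N₁ ha) H2 hc2)
      · obtain ⟨y, hy, rfl⟩ := ha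
        obtain ⟨y', hy', rfl⟩ := hb
        obtain ⟨K, hK, hadj⟩ := hN.2 y y' ((theta_adj ψ).mp hab) ⟨N₁, hN₁, hy⟩ ⟨N₂, hN₂, hy'⟩
        exact ⟨fwdSub ψ K, Finset.mem_union_right _ (Finset.mem_image_of_mem _ hK),
          (fwdSub_adj' ψ K).mpr hadj⟩
    · intro H hH
      rcases hmem' H hH with h | ⟨N₀, hN₀, rfl⟩
      · exact ⟨fun _ => hcnotsub H h, fun _ => h⟩
      · exact ⟨fun hmem => absurd hmem (hnotinc N₀),
          fun hns => absurd (fwdSub_verts_subset ψ N₀) hns⟩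
  have hΦmem : ∀ M : Finset G.Subgraph,
      (IsInducedFMatching F G M ∧ c ⊆ M ∧ ∀ H ∈ M, (H ∈ c ↔ ¬ H.verts ⊆ Z)) →
      IsInducedFMatching F Y ((M \ c).image (backSub ψ)) := by
    rintro M ⟨hM, hcsub, hiff⟩
    have hI : ∀ H ∈ M \ c, H ∈ M ∧ H.verts ⊆ Z := by
      intro H hH
      obtain ⟨h1, h2⟩ := Finset.mem_sdiff.mp hH
      exact ⟨h1, not_not.mp (fun hns => h2 ((hiff H h1).mpr hns))⟩
    refine ⟨⟨?_, ?_⟩, ?_⟩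
    · intro K hK
      obtain ⟨H, hH, rfl⟩ := Finset.mem_image.mp hK
      have h1 : (fwdSub ψ (backSub ψ H)).IsCopyOf F := by
        rw [fwdSub_backSub ψ H (hI H hH).2]
        exact hM.1.1 H (hI H hH).1
      exact (isCopyOf_fwdSub ψ _).mp h1
    · intro K1 k1 K2 k2 hne
      obtain ⟨H1, hH1, rfl⟩ := Finset.mem_image.mp (Finset.mem_coe.mp k1)
      obtain ⟨H2, hH2, rfl⟩ := Finset.mem_image.mp (Finset.mem_coe.mp k2)
      have hne' : H1 ≠ H2 := by rintro rfl; exact hne rfl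
      have hd := hM.1.2 (Finset.mem_coe.mpr (hI H1 hH1).1) (Finset.mem_coe.mpr (hI H2 hH2).1) hne'
      exact hd.preimage _
    · rintro y y' hadj ⟨K1, k1, hy⟩ ⟨K2, k2, hy'⟩
      obtain ⟨H1, hH1, rfl⟩ := Finset.mem_image.mp k1
      obtain ⟨H2, hH2, rfl⟩ := Finset.mem_image.mp k2
      obtain ⟨K, hK, hKadj⟩ := hM.2 (thetaMap ψ y) (thetaMap ψ y') ((theta_adj ψ).mpr hadj)
        ⟨H1, (hI H1 hH1).1, hy⟩ ⟨H2, (hI H2 hH2).1, hy'⟩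
      have hKH1 : K = H1 := matching_mem_eq hM.1.2 hK (hI H1 hH1).1 (K.edge_vert hKadj) hy
      exact ⟨backSub ψ H1, Finset.mem_image_of_mem _ hH1, hKH1 ▸ hKadj⟩
  refine
    { toFun := fun M => ⟨(M.1 \ c).image (backSub ψ), hΦmem M.1 M.2⟩
      invFun := fun N => ⟨c ∪ N.1.image (fwdSub ψ), hΨmem N.1 N.2⟩
      left_inv := ?_
      right_inv := ?_ }
  · rintro ⟨M, hM, hcsub, hiff⟩
    apply Subtype.ext
    show c ∪ ((M \ c).image (backSub ψ)).image (fwdSub ψ) = M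
    rw [Finset.image_image]
    have himg : (M \ c).image (fwdSub ψ ∘ backSub ψ) = M \ c := by
      rw [Finset.image_congr (g := id) ?_, Finset.image_id]
      intro H hH
      obtain ⟨h1, h2⟩ := Finset.mem_sdiff.mp hH
      exact fwdSub_backSub ψ H (not_not.mp (fun hns => h2 ((hiff H h1).mpr hns)))
    rw [himg, Finset.union_sdiff_of_subset hcsub]
  · rintro ⟨N, hN⟩
    apply Subtype.ext
    show ((c ∪ N.image (fwdSub ψ)) \ c).image (backSub ψ) = N
    have hdisj : Disjoint c (N.image (fwdSub ψ)) := by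
      rw [Finset.disjoint_left]
      intro H hH hH'
      obtain ⟨N₀, _, rfl⟩ := Finset.mem_image.mp hH'
      exact hnotinc N₀ hH
    rw [Finset.union_sdiff_cancel_left hdisj, Finset.image_image]
    rw [Finset.image_congr (g := id) ?_, Finset.image_id]
    intro N₀ _
    exact backSub_fwdSub ψ N₀

def covSet {VT : Type*} {T : SimpleGraph VT} (c : Finset T.Subgraph) : Set VT :=
  {x | ∃ H ∈ c, x ∈ H.verts}

lemma mem_covSet {VT : Type*} {T : SimpleGraph VT} {c : Finset T.Subgraph} {x : VT} :
    x ∈ covSet c ↔ ∃ H ∈ c, x ∈ H.verts := Iff.rfl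

lemma exists_free_branch {VF VT : Type*} [Fintype VF]
    (F : SimpleGraph VF) [DecidableRel F.Adj]
    {T : SimpleGraph VT} {v : VT}
    (mv : Fin (F.maxDegree + 1) → VT) (hmv_inj : Function.Injective mv)
    (hTadj : ∀ j, T.Adj v (mv j))
    {c : Finset T.Subgraph} (hc : IsInducedFMatching F T c)
    (hv : v ∈ covSet c) :
    ∃ j : Fin (F.maxDegree + 1), mv j ∉ covSet c := by
  by_contra hall
  push_neg at hall
  obtain ⟨H, hH, hvH⟩ := hv
  have hcover : ∀ j, H.Adj v (mv j) := by
    intro j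
    obtain ⟨K, hK, hadj⟩ := hc.2 v (mv j) (hTadj j) ⟨H, hH, hvH⟩ (hall j)
    have hKH : K = H := matching_mem_eq hc.1.2 hK hH (K.edge_vert hadj) hvH
    exact hKH ▸ hadj
  obtain ⟨f⟩ := hc.1.1 H hH
  let vv : ↥H.verts := ⟨v, hvH⟩
  let g : Fin (F.maxDegree + 1) → ↥(F.neighborSet (f vv)) := fun j =>
    ⟨f ⟨mv j, H.edge_vert (hcover j).symm⟩, by
      have : H.coe.Adj vv ⟨mv j, H.edge_vert (hcover j).symm⟩ := hcover j
      exact f.map_rel_iff.mpr this⟩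
  have hinj : Function.Injective g := by
    intro a b hab
    have h1 := Subtype.mk_eq_mk.mp hab
    have h2 := f.toEquiv.injective h1
    have h3 : mv a = mv b := Subtype.mk_eq_mk.mp h2
    exact hmv_inj h3
  have hcard := Fintype.card_le_of_injective g hinj
  rw [Fintype.card_fin] at hcard
  have hdeg : Fintype.card ↥(F.neighborSet (f vv)) = F.degree (f vv) :=
    F.card_neighborSet_eq_degree (f vv)
  have hmax := F.degree_le_maxDegree (f vv)
  omega

lemma master {VF VY VT : Type*} [Fintype VF] [Fintype VT]
    (F : SimpleGraph VF) [DecidableRel F.Adj] (hFc : F.Connected)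
    (Y : SimpleGraph VY)
    (m : ℕ) (hYm : m ∣ numInducedFMatchings F Y)
    (T : SimpleGraph VT) (v : VT)
    (mv : Fin (F.maxDegree + 1) → VT) (hmv_inj : Function.Injective mv)
    (Zs : Fin (F.maxDegree + 2) → Set VT)
    (hvZs : ∀ i, v ∉ Zs i)
    (hmvZs : ∀ j i, mv j ∉ Zs i)
    (hTadj : ∀ j, T.Adj v (mv j))
    (hbZ0 : ∀ a b, T.Adj a b → b ∈ Zs 0 → a ∉ Zs 0 → a = v)
    (hbZs : ∀ (j : Fin (F.maxDegree + 1)) (a b : VT),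
      T.Adj a b → b ∈ Zs j.succ → a ∉ Zs j.succ → a = mv j)
    (hiso : ∀ i, Nonempty (T.induce (Zs i) ≃g Y)) :
    m ∣ numInducedFMatchings F T := by
  classical
  have hVF : Nonempty VF := hFc.nonempty
  haveI : Finite T.Subgraph := subgraph_finite T
  haveI : Fintype T.Subgraph := Fintype.ofFinite _
  have finS : {M : Finset T.Subgraph | IsInducedFMatching F T M}.Finite := Set.toFinite _
  set s : Finset (Finset T.Subgraph) := finS.toFinset with hs
  let zf : Finset T.Subgraph → Fin (F.maxDegree + 2) := fun c =>
    zidxA F.maxDegree (v ∈ covSet c) (fun j => mv j ∈ covSet c)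
  let out : Finset T.Subgraph → Finset T.Subgraph := fun M =>
    M.filter (fun H => ¬ H.verts ⊆ Zs (zf M))
  have hnum : numInducedFMatchings F T = s.card := by
    rw [← Set.ncard_coe_finset s, Set.Finite.coe_toFinset]
    rfl
  rw [hnum, Finset.card_eq_sum_card_fiberwise
    (f := out) (t := s.image out) (fun x hx => Finset.mem_image_of_mem _ hx)]
  refine Finset.dvd_sum ?_
  intro c hc
  obtain ⟨M₀, hM₀s, hM₀c⟩ := Finset.mem_image.mp hc
  have hM₀ : IsInducedFMatching F T M₀ := (Set.Finite.mem_toFinset finS).mp hM₀s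
  have hz_of : ∀ (M : Finset T.Subgraph) (i : Fin (F.maxDegree + 2)),
      c ⊆ M → (∀ H ∈ M, H ∉ c → H.verts ⊆ Zs i) → zf M = zf c := by
    intro M i hsub hcomp
    have hagree : ∀ x : VT, (∀ i', x ∉ Zs i') → ((x ∈ covSet M) = (x ∈ covSet c)) := by
      intro x hx
      apply propext
      constructor
      · rintro ⟨H, hH, hxH⟩
        by_cases hHc : H ∈ c
        · exact ⟨H, hHc, hxH⟩
        · exact absurd (hcomp H hH hHc hxH) (hx i)
      · rintro ⟨H, hH, hxH⟩
        exact ⟨H, hsub hH, hxH⟩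
    have hP : (v ∈ covSet M) = (v ∈ covSet c) := hagree v (fun i' => hvZs i')
    have hQ : (fun j : Fin (F.maxDegree + 1) => mv j ∈ covSet M)
        = (fun j => mv j ∈ covSet c) := funext fun j => hagree (mv j) (fun i' => hmvZs j i')
    show zidxA F.maxDegree (v ∈ covSet M) (fun j => mv j ∈ covSet M)
        = zidxA F.maxDegree (v ∈ covSet c) (fun j => mv j ∈ covSet c)
    rw [hP, hQ]
  have hcM0 : c ⊆ M₀ := by rw [← hM₀c]; exact Finset.filter_subset _ _
  have hcomp₀ : ∀ H ∈ M₀, H ∉ c → H.verts ⊆ Zs (zf M₀) := by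
    intro H hH hHc
    by_contra hns
    exact hHc (by rw [← hM₀c]; exact Finset.mem_filter.mpr ⟨hH, hns⟩)
  have hzc : zf M₀ = zf c := hz_of M₀ (zf M₀) hcM0 hcomp₀
  have hcMatch : IsInducedFMatching F T c := hM₀.subset hcM0
  have huncov : ∀ a b, T.Adj a b → b ∈ Zs (zf c) → a ∉ Zs (zf c) → a ∉ covSet c := by
    intro a b hab hb ha
    by_cases hv : v ∈ covSet c
    · obtain ⟨j, hj, hjz⟩ := zidxA_pos hv (exists_free_branch F mv hmv_inj hTadj hcMatch hv)
      have hzz : zf c = j.succ := hjz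
      rw [hzz] at hb ha
      rw [hbZs j a b hab hb ha]
      exact hj
    · have hzz : zf c = 0 := zidxA_neg hv
      rw [hzz] at hb ha
      rw [hbZ0 a b hab hb ha]
      exact hv
  have hbound : ∀ a b, T.Adj a b → a ∉ Zs (zf c) → b ∈ Zs (zf c) → ∀ H ∈ c, a ∉ H.verts := by
    intro a b hab ha hb H hH haH
    exact huncov a b hab hb ha ⟨H, hH, haH⟩
  have hcne : ∀ H ∈ c, H.verts.Nonempty := fun H hH => (hcMatch.1.1 H hH).verts_nonempty hVF
  have hcZ : ∀ H ∈ c, Disjoint H.verts (Zs (zf c)) := by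
    intro H hH
    rw [Set.disjoint_right]
    intro x hxZ hxH
    have hHf : H ∈ out M₀ := by rw [hM₀c]; exact hH
    have hnsub : ¬ H.verts ⊆ Zs (zf c) := by
      rw [← hzc]
      exact (Finset.mem_filter.mp hHf).2
    obtain ⟨x', hx', hx'Z⟩ := Set.not_subset.mp hnsub
    have hconn := (hcMatch.1.1 H hH).coe_connected hFc
    obtain ⟨p⟩ := hconn.preconnected ⟨x', hx'⟩ ⟨x, hxH⟩
    obtain ⟨a, b, hab, hPa, hPb⟩ :=
      walk_crossing (fun w : ↥H.verts => ↑w ∈ Zs (zf c)) p hx'Z hxZ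
    have hTab : T.Adj ↑a ↑b := H.adj_sub hab
    exact huncov ↑a ↑b hTab hPb hPa ⟨H, hH, a.2⟩
  obtain ⟨ψ⟩ := hiso (zf c)
  have hfib := fiber_ncard F hVF ψ c hcMatch hcne hcZ hbound
  have hout_iff : ∀ M, IsInducedFMatching F T M → (out M = c ↔
      (c ⊆ M ∧ ∀ H ∈ M, (H ∈ c ↔ ¬ H.verts ⊆ Zs (zf c)))) := by
    intro M _
    constructor
    · intro hout
      have hsub : c ⊆ M := by rw [← hout]; exact Finset.filter_subset _ _
      have hcomp : ∀ H ∈ M, H ∉ c → H.verts ⊆ Zs (zf M) := by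
        intro H hH hHc
        by_contra hns
        exact hHc (by rw [← hout]; exact Finset.mem_filter.mpr ⟨hH, hns⟩)
      have hz : zf M = zf c := hz_of M (zf M) hsub hcomp
      refine ⟨hsub, fun H hH => ?_⟩
      constructor
      · intro hHc
        have hHf : H ∈ out M := by rw [hout]; exact hHc
        rw [← hz]
        exact (Finset.mem_filter.mp hHf).2
      · intro hns
        have : H ∈ out M := Finset.mem_filter.mpr ⟨hH, by rw [hz]; exact hns⟩
        rw [hout] at this
        exact this
    · rintro ⟨hsub, hiff⟩
      have hcomp : ∀ H ∈ M, H ∉ c → H.verts ⊆ Zs (zf c) := by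
        intro H hH hHc
        exact not_not.mp (fun hns => hHc ((hiff H hH).mpr hns))
      have hz : zf M = zf c := hz_of M (zf c) hsub hcomp
      show M.filter (fun H => ¬ H.verts ⊆ Zs (zf M)) = c
      rw [hz]
      ext H
      rw [Finset.mem_filter]
      constructor
      · rintro ⟨hH, hns⟩
        exact (hiff H hH).mpr hns
      · intro hHc
        exact ⟨hsub hHc, (hiff H (hsub hHc)).mp hHc⟩
  have hset : ((s.filter (fun M => out M = c) : Finset (Finset T.Subgraph)) : Set (Finset T.Subgraph)) =
      {M | IsInducedFMatching F T M ∧ c ⊆ M ∧ ∀ H ∈ M, (H ∈ c ↔ ¬ H.verts ⊆ Zs (zf c))} := by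
    ext M
    simp only [Finset.coe_filter, Set.mem_setOf_eq, hs, Set.Finite.mem_toFinset]
    constructor
    · rintro ⟨hM, hout⟩
      exact ⟨hM, (hout_iff M hM).mp hout⟩
    · rintro ⟨hM, h2⟩
      exact ⟨hM, (hout_iff M hM).mpr h2⟩
  have hcardfib : (s.filter (fun M => out M = c)).card = numInducedFMatchings F Y := by
    rw [← Set.ncard_coe_finset, hset, hfib]
  rw [hcardfib]
  exact hYm


section NT
variable {VY : Type*} {D : ℕ} {Y : SimpleGraph VY} {y₀ : Fin (D + 2) → VY}

lemma nt_adj_none_inr (j : Fin (D + 1)) :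
    (nullifyingTree' D Y y₀).Adj none (some (Sum.inr j)) := by
  simp [nullifyingTree', SimpleGraph.fromRel_adj]

lemma nt_adj_copy {i : Fin (D + 2)} {y y' : VY} :
    (nullifyingTree' D Y y₀).Adj (some (Sum.inl (i, y))) (some (Sum.inl (i, y'))) ↔
      Y.Adj y y' := by
  rw [nullifyingTree', SimpleGraph.fromRel_adj]
  constructor
  · rintro ⟨hne, h | h⟩
    · exact h.2
    · exact h.2.symm
  · intro h
    exact ⟨by simp [h.ne], Or.inl ⟨rfl, h⟩⟩

lemma nt_adj_cases {i : Fin (D + 2)} {y : VY}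
    {p : Option ((Fin (D + 2) × VY) ⊕ Fin (D + 1))}
    (h : (nullifyingTree' D Y y₀).Adj p (some (Sum.inl (i, y)))) :
    (∃ y', p = some (Sum.inl (i, y'))) ∨ (i = 0 ∧ p = none) ∨
      (∃ j : Fin (D + 1), i = j.succ ∧ p = some (Sum.inr j)) := by
  rw [nullifyingTree', SimpleGraph.fromRel_adj] at h
  obtain ⟨hne, h | h⟩ := h
  · match p, h with
    | some (Sum.inl (i', y')), h => exact Or.inl ⟨y', by rw [h.1]⟩
    | none, h => exact Or.inr (Or.inl ⟨h.1, rfl⟩)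
    | some (Sum.inr j), h => exact Or.inr (Or.inr ⟨j, h.1, rfl⟩)
  · match p, h with
    | some (Sum.inl (i', y')), h => exact Or.inl ⟨y', by rw [← h.1]⟩
    | none, h => exact h.elim
    | some (Sum.inr j), h => exact h.elim
end NT

lemma geom_master {VF VY VT : Type*} [Fintype VF] [Fintype VT]
    (F : SimpleGraph VF) [DecidableRel F.Adj] (hFc : F.Connected)
    (Y : SimpleGraph VY)
    (m : ℕ) (hYm : m ∣ numInducedFMatchings F Y)
    (y₀ : Fin (F.maxDegree + 2) → VY)
    (T : SimpleGraph VT) (v : VT) (W : Set VT) (hvW : v ∈ W)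
    (hWedge : ∀ a b, T.Adj a b → a ∈ W → b ∉ W → a = v)
    (e : T.induce W ≃g nullifyingTree' F.maxDegree Y y₀)
    (he : e ⟨v, hvW⟩ = none) :
    m ∣ numInducedFMatchings F T := by
  classical
  have hadjW : ∀ x y : ↥W, T.Adj ↑x ↑y ↔
      (nullifyingTree' F.maxDegree Y y₀).Adj (e x) (e y) := by
    intro x y
    exact ⟨fun h => e.map_rel_iff.mpr h, fun h => e.map_rel_iff.mp h⟩
  have hev : ∀ hx : v ∈ W, e ⟨v, hx⟩ = none := by
    intro hx
    rw [show (⟨v, hx⟩ : ↥W) = ⟨v, hvW⟩ from Subtype.ext rfl]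
    exact he
  set mv : Fin (F.maxDegree + 1) → VT := fun j => ↑(e.symm (some (Sum.inr j))) with hmv
  set Zs : Fin (F.maxDegree + 2) → Set VT := fun i =>
    {x | ∃ hx : x ∈ W, ∃ y : VY, e ⟨x, hx⟩ = some (Sum.inl (i, y))} with hZs
  have hmemZs : ∀ (i : Fin (F.maxDegree + 2)) (x : VT),
      x ∈ Zs i ↔ ∃ hx : x ∈ W, ∃ y : VY, e ⟨x, hx⟩ = some (Sum.inl (i, y)) := by
    intro i x; rfl
  have hmvW : ∀ j, mv j ∈ W := fun j => (e.symm (some (Sum.inr j))).2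
  have hemv : ∀ (j : Fin (F.maxDegree + 1)) (hx : mv j ∈ W),
      e ⟨mv j, hx⟩ = some (Sum.inr j) := by
    intro j hx
    rw [show (⟨mv j, hx⟩ : ↥W) = e.symm (some (Sum.inr j)) from Subtype.ext rfl,
      e.apply_symm_apply]
  have hmv_inj : Function.Injective mv := by
    intro a b h
    have h2 := e.symm.toEquiv.injective (Subtype.val_injective h)
    simpa using h2
  have hvZs : ∀ i, v ∉ Zs i := by
    intro i hvz
    obtain ⟨hx, y, hy⟩ := (hmemZs i v).mp hvz
    rw [hev hx] at hy
    simp at hy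
  have hmvZs : ∀ j i, mv j ∉ Zs i := by
    intro j i hz
    obtain ⟨hx, y, hy⟩ := (hmemZs i (mv j)).mp hz
    rw [hemv j hx] at hy
    simp at hy
  have hTadj : ∀ j, T.Adj v (mv j) := by
    intro j
    have h1 : (nullifyingTree' F.maxDegree Y y₀).Adj (e ⟨v, hvW⟩)
        (e (e.symm (some (Sum.inr j)))) := by
      rw [e.apply_symm_apply, hev hvW]
      exact nt_adj_none_inr j
    exact (hadjW ⟨v, hvW⟩ (e.symm (some (Sum.inr j)))).mpr h1
  have hbgen : ∀ (i : Fin (F.maxDegree + 2)) a b, T.Adj a b → b ∈ Zs i → a ∉ Zs i →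
      (a = v ∧ i = 0) ∨ (∃ j : Fin (F.maxDegree + 1), i = j.succ ∧ a = mv j) := by
    intro i a b hab hb ha
    obtain ⟨hbW, y, hy⟩ := (hmemZs i b).mp hb
    by_cases haW : a ∈ W
    · have hZadj := (hadjW ⟨a, haW⟩ ⟨b, hbW⟩).mp hab
      rw [hy] at hZadj
      rcases nt_adj_cases hZadj with ⟨y', hp⟩ | ⟨hi0, hp⟩ | ⟨j, hij, hp⟩
      · exact absurd ((hmemZs i a).mpr ⟨haW, y', hp⟩) ha
      · have h3 : e ⟨a, haW⟩ = e ⟨v, hvW⟩ := by rw [hp, hev hvW]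
        have hav := e.toEquiv.injective h3
        exact Or.inl ⟨Subtype.mk_eq_mk.mp hav, hi0⟩
      · refine Or.inr ⟨j, hij, ?_⟩
        have h3 : (⟨a, haW⟩ : ↥W) = e.symm (some (Sum.inr j)) := by
          rw [← hp, e.symm_apply_apply]
        exact Subtype.mk_eq_mk.mp h3
    · exfalso
      have hbv : b = v := hWedge b a hab.symm hbW haW
      subst hbv
      rw [hev hbW] at hy
      simp at hy
  have hbZ0 : ∀ a b, T.Adj a b → b ∈ Zs 0 → a ∉ Zs 0 → a = v := by
    intro a b hab hb ha
    rcases hbgen 0 a b hab hb ha with ⟨hav, _⟩ | ⟨j, hj, _⟩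
    · exact hav
    · exact absurd hj.symm (Fin.succ_ne_zero j)
  have hbZs : ∀ (j : Fin (F.maxDegree + 1)) (a b : VT),
      T.Adj a b → b ∈ Zs j.succ → a ∉ Zs j.succ → a = mv j := by
    intro j a b hab hb ha
    rcases hbgen j.succ a b hab hb ha with ⟨_, hj0⟩ | ⟨j', hj', hamv⟩
    · exact absurd hj0 (Fin.succ_ne_zero j)
    · have hjj : j' = j := Fin.succ_injective _ hj'.symm
      rw [hamv, hjj]
  have hiso : ∀ i, Nonempty (T.induce (Zs i) ≃g Y) := by
    intro i
    have hmem : ∀ y : VY, ↑(e.symm (some (Sum.inl (i, y)))) ∈ Zs i := by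
      intro y
      refine (hmemZs i _).mpr ⟨(e.symm (some (Sum.inl (i, y)))).2, y, ?_⟩
      rw [show (⟨↑(e.symm (some (Sum.inl (i, y)))),
          (e.symm (some (Sum.inl (i, y)))).2⟩ : ↥W) = e.symm (some (Sum.inl (i, y)))
        from Subtype.ext rfl, e.apply_symm_apply]
    let φ : VY → ↥(Zs i) := fun y => ⟨↑(e.symm (some (Sum.inl (i, y)))), hmem y⟩
    have hφbij : Function.Bijective φ := by
      constructor
      · intro a b h
        have h1 : (e.symm (some (Sum.inl (i, a))) : ↥W) = e.symm (some (Sum.inl (i, b))) :=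
          Subtype.val_injective (Subtype.mk_eq_mk.mp h)
        have h2 := e.symm.toEquiv.injective h1
        simpa using h2
      · rintro ⟨x, hx⟩
        obtain ⟨hxW, y, hy⟩ := (hmemZs i x).mp hx
        refine ⟨y, Subtype.ext ?_⟩
        show ↑(e.symm (some (Sum.inl (i, y)))) = x
        rw [← hy, e.symm_apply_apply]
    have hmapiff : ∀ y y' : VY,
        (T.induce (Zs i)).Adj (φ y) (φ y') ↔ Y.Adj y y' := by
      intro y y'
      have h1 : (T.induce (Zs i)).Adj (φ y) (φ y') ↔ T.Adj ↑(φ y) ↑(φ y') := Iff.rfl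
      rw [h1]
      have h2 := hadjW (e.symm (some (Sum.inl (i, y)))) (e.symm (some (Sum.inl (i, y'))))
      rw [e.apply_symm_apply, e.apply_symm_apply] at h2
      exact h2.trans nt_adj_copy
    refine ⟨SimpleGraph.Iso.symm ⟨Equiv.ofBijective φ hφbij, ?_⟩⟩
    intro y y'
    exact hmapiff y y'
  exact master F hFc Y m hYm T v mv hmv_inj Zs hvZs hmvZs hTadj hbZ0 hbZs hiso


/-- Lemma 3.1 of the paper: let `F` be a tree, `m > 0`, and `Y` a tree with
`m ∣ s'(F,Y)` where `s'` counts induced `F`-matchings.  If a tree `T` has an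
edge `{u,v}` such that `T^{(u,v)}` (the component of `v` in `T` minus the edge
`{u,v}`, rooted at `v`) is isomorphic as a rooted tree to the nullifying tree
`Z'` built from `Δ(F) + 2` copies of `Y`, then `m ∣ s'(F,T)`. -/
theorem dvd_numInducedFMatchings_of_nullifying_leaf
    {VF VY VT : Type*} [Fintype VF] [Fintype VY] [Fintype VT]
    (F : SimpleGraph VF) [DecidableRel F.Adj] (hF : F.IsTree)
    (m : ℕ) (hm : 0 < m)
    (Y : SimpleGraph VY) (hY : Y.IsTree) (hYm : m ∣ numInducedFMatchings F Y)
    (y₀ : Fin (F.maxDegree + 2) → VY)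
    (T : SimpleGraph VT) (hT : T.IsTree) (u v : VT) (huv : T.Adj u v)
    (e : SimpleGraph.induce (((T.deleteEdges {s(u, v)}).connectedComponentMk v).supp) T
        ≃g nullifyingTree' F.maxDegree Y y₀)
    (he : e ⟨v, rfl⟩ = none) :
    m ∣ numInducedFMatchings F T := by
  classical
  have huW : u ∉ ((T.deleteEdges {s(u, v)}).connectedComponentMk v).supp := by
    intro hu
    have hbr := (SimpleGraph.isAcyclic_iff_forall_adj_isBridge.mp hT.2) huv
    rw [SimpleGraph.isBridge_iff] at hbr
    have hde : T.deleteEdges {s(u, v)} = T \ SimpleGraph.fromEdgeSet {s(u, v)} := by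
      ext a b
      rw [SimpleGraph.deleteEdges_adj, SimpleGraph.sdiff_adj, SimpleGraph.fromEdgeSet_adj]
      constructor
      · rintro ⟨h1, h2⟩; exact ⟨h1, fun hc => h2 hc.1⟩
      · rintro ⟨h1, h2⟩; exact ⟨h1, fun hmem => h2 ⟨hmem, h1.ne⟩⟩
    have hreach : (T.deleteEdges {s(u, v)}).Reachable u v :=
      SimpleGraph.ConnectedComponent.eq.mp
        ((SimpleGraph.ConnectedComponent.mem_supp_iff _ _).mp hu)
    rw [hde] at hreach
    exact hbr (by rwa [← hde] at hreach)
  have hWedge : ∀ a b, T.Adj a b →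
      a ∈ ((T.deleteEdges {s(u, v)}).connectedComponentMk v).supp →
      b ∉ ((T.deleteEdges {s(u, v)}).connectedComponentMk v).supp → a = v := by
    intro a b hab haW hbW
    by_cases hEq : s(a, b) = s(u, v)
    · rcases Sym2.eq_iff.mp hEq with ⟨rfl, rfl⟩ | ⟨rfl, rfl⟩
      · exact absurd haW huW
      · rfl
    · exfalso
      have hadj : (T.deleteEdges {s(u, v)}).Adj a b := by
        rw [SimpleGraph.deleteEdges_adj]
        exact ⟨hab, by simpa using hEq⟩
      apply hbW
      rw [SimpleGraph.ConnectedComponent.mem_supp_iff] at haW ⊢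
      rw [← SimpleGraph.ConnectedComponent.eq.mpr hadj.reachable]
      exact haW
  exact geom_master F hF.1 Y m hYm y₀ T v
    (((T.deleteEdges {s(u, v)}).connectedComponentMk v).supp) rfl hWedge e he
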